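/- arXiv:1910.00298 — 3 statements merged into one kernel-verified Lean document; each statement's English description precedes it below -/
import Mathlib

section
/- Let d be a positive integer, let σ be a nonzero real number, and let μ₁, …, μ_ℓ be pairwise distinct points in ℝ^d. Then the ℓ×ℓ real matrix R with entries R_{ij} = exp(−σ² ‖μ_i − μ_j‖²) (Euclidean norm) is symmetric positive definite; in particular, for every nonzero vector c ∈ ℝ^ℓ one has ∑_{i,j} c_i c_j exp(−σ² ‖μ_i − μ_j‖²) > 0. -/
open scoped RealInnerProductSpace
open Finset

private lemma summableFinsetSum {ι : Type*} (s : Finset ι) (f : ι → ℕ → ℝ)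
    (h : ∀ i ∈ s, Summable (f i)) : Summable fun n => ∑ i ∈ s, f i n := by
  classical
  induction s using Finset.induction with
  | empty => simpa using summable_zero
  | @insert a s' hx ih =>
    simp only [Finset.sum_insert hx]
    exact (h a (Finset.mem_insert_self a s')).add
      (ih fun i hi => h i (Finset.mem_insert_of_mem hi))

private lemma listProdApply {ℓ d : ℕ} (μ : Fin ℓ → EuclideanSpace ℝ (Fin d))
    (ks : List (Fin d)) (i : Fin ℓ) :
    ((ks.map (fun k => (fun i' => μ i' k : Fin ℓ → ℝ))).prod) i
      = (ks.map fun k => μ i k).prod := by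
  induction ks with
  | nil => simp
  | cons h t ih => simp [ih]

private lemma gaussian_quad_pos
    {d : ℕ} {σ : ℝ} (hσ : σ ≠ 0) {ℓ : ℕ}
    (μ : Fin ℓ → EuclideanSpace ℝ (Fin d)) (hμ : Function.Injective μ)
    (c : Fin ℓ → ℝ) (hc : c ≠ 0) :
    0 < ∑ i, ∑ j, c i * c j * Real.exp (-(σ ^ 2) * ‖μ i - μ j‖ ^ 2) := by
  set a : Fin ℓ → ℝ := fun i => c i * Real.exp (-(σ ^ 2) * ‖μ i‖ ^ 2) with ha
  set t : Fin ℓ → Fin ℓ → ℝ := fun i j => 2 * σ ^ 2 * ⟪μ i, μ j⟫ with ht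
  have hterm : ∀ i j, c i * c j * Real.exp (-(σ ^ 2) * ‖μ i - μ j‖ ^ 2)
      = a i * a j * Real.exp (t i j) := by
    intro i j
    have : -(σ ^ 2) * ‖μ i - μ j‖ ^ 2
        = (-(σ ^ 2) * ‖μ i‖ ^ 2) + (-(σ ^ 2) * ‖μ j‖ ^ 2) + t i j := by
      rw [norm_sub_sq_real]; ring
    rw [this, Real.exp_add, Real.exp_add, ha]
    ring
  set Q := ∑ i, ∑ j, c i * c j * Real.exp (-(σ ^ 2) * ‖μ i - μ j‖ ^ 2) with hQ
  set f : Fin ℓ → Fin ℓ → ℕ → ℝ :=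
    fun i j n => a i * a j * ((t i j) ^ n / n.factorial) with hf
  set U : ℕ → ℝ := fun n => ∑ i, ∑ j, f i j n with hU
  have hsum : ∀ i j, Summable (f i j) := by
    intro i j
    exact (Real.summable_pow_div_factorial (t i j)).mul_left (a i * a j)
  have hsum2 : ∀ i, Summable fun n => ∑ j, f i j n :=
    fun i => summableFinsetSum _ _ fun j _ => hsum i j
  have hQU : Q = ∑' n : ℕ, U n := by
    rw [hQ]
    have h1 : ∀ i j, c i * c j * Real.exp (-(σ ^ 2) * ‖μ i - μ j‖ ^ 2)
        = ∑' n : ℕ, f i j n := by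
      intro i j
      rw [hterm i j, Real.exp_eq_exp_ℝ, NormedSpace.exp_eq_tsum_div, hf]
      exact tsum_mul_left.symm
    simp only [h1]
    have h2 : ∀ i : Fin ℓ, ∑ j, ∑' n : ℕ, f i j n = ∑' n : ℕ, ∑ j, f i j n :=
      fun i => (Summable.tsum_finsetSum fun j _ => hsum i j).symm
    simp only [h2]
    exact (Summable.tsum_finsetSum fun i _ => hsum2 i).symm
  set m : (n : ℕ) → (Fin n → Fin d) → Fin ℓ → ℝ := fun n α i => ∏ s : Fin n, μ i (α s) with hm
  have hUkey : ∀ n : ℕ, U n = ∑ α : Fin n → Fin d,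
      ((2 * σ ^ 2) ^ n / n.factorial) * (∑ i, a i * m n α i) ^ 2 := by
    intro n
    have hinner : ∀ i j : Fin ℓ, (t i j) ^ n
        = (2 * σ ^ 2) ^ n * ∑ α : Fin n → Fin d, m n α i * m n α j := by
      intro i j
      rw [ht, mul_pow]
      congr 1
      have h1 : ⟪μ i, μ j⟫ = ∑ k, μ i k * μ j k := by
        simp [PiLp.inner_apply, RCLike.inner_apply, mul_comm]
      have h2 : (∑ k, μ i k * μ j k) ^ n = ∏ _s : Fin n, (∑ k, μ i k * μ j k) := by
        simp
      rw [h1, h2, Finset.prod_univ_sum]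
      rw [show (Fintype.piFinset fun _ : Fin n => (univ : Finset (Fin d)))
            = (univ : Finset (Fin n → Fin d)) by simp]
      refine Finset.sum_congr rfl fun α _ => ?_
      rw [hm, ← Finset.prod_mul_distrib]
    have step1 : ∀ i j : Fin ℓ, f i j n = ∑ α : Fin n → Fin d,
        ((2 * σ ^ 2) ^ n / n.factorial) * ((a i * m n α i) * (a j * m n α j)) := by
      intro i j
      simp only [hf]
      rw [hinner i j, Finset.mul_sum, Finset.sum_div, Finset.mul_sum]
      refine Finset.sum_congr rfl fun α _ => ?_
      field_simp
    rw [hU]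
    simp only [step1]
    have h3 : ∀ i : Fin ℓ, ∑ j, ∑ α : Fin n → Fin d,
        ((2 * σ ^ 2) ^ n / n.factorial) * ((a i * m n α i) * (a j * m n α j))
        = ∑ α : Fin n → Fin d, ∑ j,
        ((2 * σ ^ 2) ^ n / n.factorial) * ((a i * m n α i) * (a j * m n α j)) :=
      fun i => Finset.sum_comm
    simp only [h3]
    rw [Finset.sum_comm]
    refine Finset.sum_congr rfl fun α _ => ?_
    rw [show (∑ i, a i * m n α i) ^ 2 = ∑ i, ∑ j, (a i * m n α i) * (a j * m n α j) by
      rw [sq, Finset.sum_mul_sum]]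
    rw [Finset.mul_sum]
    refine Finset.sum_congr rfl fun i _ => ?_
    rw [Finset.mul_sum]
  have hcoef : ∀ n : ℕ, (0:ℝ) < (2 * σ ^ 2) ^ n / n.factorial := by
    intro n
    apply div_pos
    · exact pow_pos (by positivity) n
    · exact_mod_cast Nat.factorial_pos n
  have hUnn : ∀ n, 0 ≤ U n := by
    intro n
    rw [hUkey n]
    exact Finset.sum_nonneg fun α _ => mul_nonneg (hcoef n).le (sq_nonneg _)
  have hUsummable : Summable U :=
    summableFinsetSum _ _ fun i _ => hsum2 i
  have hQnonneg : 0 ≤ Q := hQU ▸ tsum_nonneg hUnn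
  rcases lt_or_eq_of_le hQnonneg with h | h
  · exact h
  exfalso
  have hU0 : ∀ n, U n = 0 := by
    intro n
    refine le_antisymm ?_ (hUnn n)
    have := Summable.le_tsum hUsummable n (fun j _ => hUnn j)
    rw [← hQU, ← h] at this
    exact this
  have h0 : ∀ (n : ℕ) (α : Fin n → Fin d), ∑ i, a i * m n α i = 0 := by
    intro n α
    have h1 := hU0 n
    rw [hUkey n] at h1
    have h2 := (Finset.sum_eq_zero_iff_of_nonneg
      (fun α _ => mul_nonneg (hcoef n).le (sq_nonneg _))).1 h1 α (Finset.mem_univ α)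
    rcases mul_eq_zero.1 h2 with h' | h'
    · exact absurd h' (hcoef n).ne'
    · exact pow_eq_zero_iff (two_ne_zero) |>.1 h'
  have hlist : ∀ ks : List (Fin d), ∑ i, a i * (ks.map fun k => μ i k).prod = 0 := by
    intro ks
    have := h0 ks.length ks.get
    convert this using 2 with i
    congr 1
    conv_lhs => rw [← List.ofFn_get ks]
    rw [List.map_ofFn, List.prod_ofFn]
    rfl
  set coordset : Set (Fin ℓ → ℝ) := Set.range fun k : Fin d => (fun i => μ i k : Fin ℓ → ℝ)
    with hcs
  have hadj : ∀ g ∈ Algebra.adjoin ℝ coordset, ∑ i, a i * g i = 0 := by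
    intro g hg
    have hg' : g ∈ Submodule.span ℝ
        ((Submonoid.closure coordset : Submonoid (Fin ℓ → ℝ)) : Set (Fin ℓ → ℝ)) := by
      rw [← Algebra.adjoin_eq_span]
      exact hg
    clear hg
    induction hg' using Submodule.span_induction with
    | mem x hx =>
      obtain ⟨l, hl, hprod⟩ := Submonoid.exists_list_of_mem_closure hx
      have hks : ∃ ks : List (Fin d), l = ks.map fun k => (fun i => μ i k : Fin ℓ → ℝ) := by
        clear hprod
        induction l with
        | nil => exact ⟨[], rfl⟩
        | cons hd tl ih =>
          obtain ⟨k, hk⟩ := hl hd List.mem_cons_self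
          obtain ⟨ks, hks⟩ := ih (fun y hy => hl y (List.mem_cons_of_mem hd hy))
          exact ⟨k :: ks, by rw [List.map_cons, ← hk, ← hks]⟩
      obtain ⟨ks, rfl⟩ := hks
      rw [← hprod]
      have hpt : ∀ i : Fin ℓ, ((ks.map fun k => (fun i' => μ i' k : Fin ℓ → ℝ)).prod) i
          = (ks.map fun k => μ i k).prod := fun i => listProdApply μ ks i
      simp only [hpt]
      exact hlist ks
    | zero => simp
    | add x y hx hy ihx ihy =>
      simp only [Pi.add_apply, mul_add, Finset.sum_add_distrib, ihx, ihy, add_zero]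
    | smul r x hx ihx =>
      simp only [Pi.smul_apply, smul_eq_mul]
      rw [show ∑ i, a i * (r * x i) = r * ∑ i, a i * x i by
        rw [Finset.mul_sum]; exact Finset.sum_congr rfl fun i _ => by ring, ihx, mul_zero]
  obtain ⟨j, hj⟩ := Function.ne_iff.1 hc
  have haj : a j ≠ 0 := by
    rw [ha]
    exact mul_ne_zero hj (Real.exp_ne_zero _)
  have hqmem : ∀ i' : Fin ℓ,
      (fun i => ⟪μ i - μ i', μ j - μ i'⟫ : Fin ℓ → ℝ) ∈ Algebra.adjoin ℝ coordset := by
    intro i'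
    have heq : (fun i => ⟪μ i - μ i', μ j - μ i'⟫ : Fin ℓ → ℝ)
        = (∑ k : Fin d, (μ j - μ i') k • (fun i => μ i k : Fin ℓ → ℝ))
          - algebraMap ℝ (Fin ℓ → ℝ) ⟪μ i', μ j - μ i'⟫ := by
      funext i
      simp only [Pi.sub_apply, Finset.sum_apply, Pi.smul_apply, smul_eq_mul]
      rw [inner_sub_left]
      simp only [Algebra.algebraMap_eq_smul_one, Pi.smul_apply, Pi.one_apply, smul_eq_mul,
        mul_one]
      congr 1
    rw [heq]
    refine Subalgebra.sub_mem _ ?_ (Subalgebra.algebraMap_mem _ _)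
    refine Subalgebra.sum_mem _ fun k _ => Subalgebra.smul_mem _ ?_ _
    exact Algebra.subset_adjoin ⟨k, rfl⟩
  have hPmem : (∏ i' ∈ univ.erase j, (fun i => ⟪μ i - μ i', μ j - μ i'⟫ : Fin ℓ → ℝ))
      ∈ Algebra.adjoin ℝ coordset :=
    Subalgebra.prod_mem _ fun i' _ => hqmem i'
  have hP0 := hadj _ hPmem
  have hPapp : ∀ i : Fin ℓ,
      (∏ i' ∈ univ.erase j, (fun i => ⟪μ i - μ i', μ j - μ i'⟫ : Fin ℓ → ℝ)) i
        = ∏ i' ∈ univ.erase j, ⟪μ i - μ i', μ j - μ i'⟫ :=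
    fun i => Finset.prod_apply i _ _
  simp only [hPapp] at hP0
  have hvanish : ∀ i : Fin ℓ, i ≠ j →
      (∏ i' ∈ univ.erase j, ⟪μ i - μ i', μ j - μ i'⟫ : ℝ) = 0 := by
    intro i hij
    refine Finset.prod_eq_zero (Finset.mem_erase.2 ⟨hij, Finset.mem_univ i⟩) ?_
    rw [sub_self]
    exact inner_zero_left _
  rw [Finset.sum_eq_single j (fun i _ hij => by rw [hvanish i hij, mul_zero])
    (fun hnj => absurd (Finset.mem_univ j) hnj)] at hP0
  have hpos : (0:ℝ) < ∏ i' ∈ univ.erase j, ⟪μ j - μ i', μ j - μ i'⟫ := by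
    refine Finset.prod_pos fun i' hi' => ?_
    rw [real_inner_self_eq_norm_sq]
    have hne : μ j - μ i' ≠ 0 := by
      rw [sub_ne_zero]
      intro hcontra
      exact (Finset.mem_erase.1 hi').1 (hμ hcontra.symm)
    exact pow_pos (norm_pos_iff.mpr hne) 2
  exact haj (by
    rcases mul_eq_zero.1 hP0 with h' | h'
    · exact h'
    · exact absurd h' hpos.ne')

/-- The Gaussian RBF kernel matrix at pairwise distinct centers is symmetric
positive definite; in particular the associated quadratic form is strictly
positive on nonzero vectors. -/
theorem gaussian_rbf_kernel_matrix_posDef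
    (d : ℕ) (hd : 0 < d) (σ : ℝ) (hσ : σ ≠ 0) (ℓ : ℕ)
    (μ : Fin ℓ → EuclideanSpace ℝ (Fin d)) (hμ : Function.Injective μ) :
    (Matrix.of fun i j : Fin ℓ =>
        Real.exp (-(σ ^ 2) * ‖μ i - μ j‖ ^ 2)).PosDef ∧
    ∀ c : Fin ℓ → ℝ, c ≠ 0 →
      0 < ∑ i, ∑ j, c i * c j * Real.exp (-(σ ^ 2) * ‖μ i - μ j‖ ^ 2) := by
  constructor
  · constructor
    · ext i j
      simp [Matrix.conjTranspose_apply, norm_sub_rev]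
    · intro x hx
      have := gaussian_quad_pos hσ μ hμ x (fun h => hx (Finsupp.coe_eq_zero.1 h))
      simpa [Finsupp.sum_fintype, dotProduct, Matrix.mulVec, Finset.mul_sum, mul_assoc,
        mul_comm, mul_left_comm] using this
  · exact fun c hc => gaussian_quad_pos hσ μ hμ c hc
end

section
/- Let d be a positive integer, let σ > 0, and let μ₁, …, μ_ℓ be pairwise distinct points in ℝ^d. Then the ℓ×ℓ real matrix R with entries R_{ij} = 1/√(‖μ_i − μ_j‖² + σ²) (Euclidean norm) is symmetric positive definite; in particular, for every nonzero vector c ∈ ℝ^ℓ one has ∑_{i,j} c_i c_j /√(‖μ_i − μ_j‖² + σ²) > 0. -/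
open Real MeasureTheory ENNReal Matrix



lemma aux_exp_indep {ℓ : ℕ} (b : Fin ℓ → ℝ) (hb : Function.Injective b) (a : Fin ℓ → ℝ)
    (h : ∀ s : ℝ, ∑ i, a i * Real.exp (b i * s) = 0) : a = 0 := by
  have hx : Function.Injective fun i => Real.exp (b i) :=
    fun i j hij => hb (Real.exp_injective hij)
  refine Matrix.eq_zero_of_mulVec_eq_zero
    (M := (Matrix.vandermonde fun i => Real.exp (b i))ᵀ) ?_ ?_
  · rw [Matrix.det_transpose]
    exact Matrix.det_vandermonde_ne_zero_iff.mpr hx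
  · funext n
    have h0 := h (n : ℕ)
    simp only [Matrix.mulVec, dotProduct, Matrix.transpose_apply, Matrix.vandermonde_apply,
      Pi.zero_apply]
    rw [← h0]
    refine Finset.sum_congr rfl fun i _ => ?_
    show Real.exp (b i) ^ (n : ℕ) * a i = _
    rw [← Real.exp_nat_mul, mul_comm (a i), mul_comm (b i)]

lemma aux_exp_indep_multi {d ℓ : ℕ} (v : Fin ℓ → EuclideanSpace ℝ (Fin d))
    (hv : Function.Injective v) (a : Fin ℓ → ℝ)
    (h : ∀ ω : EuclideanSpace ℝ (Fin d),
      ∑ i, a i * Real.exp ((inner ℝ (v i) ω : ℝ)) = 0) : a = 0 := by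
  classical
  obtain ⟨u, hu⟩ : ∃ u : EuclideanSpace ℝ (Fin d),
      ∀ i j, i ≠ j → (inner ℝ (v i) u : ℝ) ≠ inner ℝ (v j) u := by
    by_contra hcon
    push_neg at hcon
    set S : Fin ℓ × Fin ℓ → Set (EuclideanSpace ℝ (Fin d)) := fun p =>
      {u | p.1 ≠ p.2 ∧ (inner ℝ (v p.1 - v p.2) u : ℝ) = 0} with hS
    have hnull : ∀ p, volume (S p) = 0 := by
      intro p
      by_cases hp : p.1 = p.2
      · have : S p = ∅ := by
          ext u; simp [hS, hp]
        simp [this]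
      · have hsub : S p ⊆ ((LinearMap.ker ((innerSL ℝ (v p.1 - v p.2) : EuclideanSpace ℝ (Fin d) →ₗ[ℝ] ℝ)) : Submodule ℝ (EuclideanSpace ℝ (Fin d))) : Set _) := by
          intro u hu
          simp only [SetLike.mem_coe, LinearMap.mem_ker, ContinuousLinearMap.coe_coe,
            innerSL_apply_apply]
          exact hu.2
        refine measure_mono_null hsub ?_
        refine Measure.addHaar_submodule _ _ ?_
        intro htop
        have hmem : v p.1 - v p.2 ∈ LinearMap.ker ((innerSL ℝ (v p.1 - v p.2) : EuclideanSpace ℝ (Fin d) →ₗ[ℝ] ℝ)) := by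
          rw [htop]; trivial
        have h0 : (inner ℝ (v p.1 - v p.2) (v p.1 - v p.2) : ℝ) = 0 :=
          LinearMap.mem_ker.mp hmem
        rw [real_inner_self_eq_norm_sq] at h0
        have hnz : ‖v p.1 - v p.2‖ = 0 := by
          exact pow_eq_zero_iff (two_ne_zero) |>.mp h0
        have hne : v p.1 - v p.2 ≠ 0 := sub_ne_zero.mpr (fun he => hp (hv he))
        exact hne (norm_eq_zero.mp hnz)
    have hcover : (Set.univ : Set (EuclideanSpace ℝ (Fin d))) ⊆ ⋃ p, S p := by
      intro u _
      obtain ⟨i, j, hij, he⟩ := hcon u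
      simp only [Set.mem_iUnion]
      exact ⟨(i, j), hij, by rw [inner_sub_left, sub_eq_zero]; exact he⟩
    have h2 : volume (Set.univ : Set (EuclideanSpace ℝ (Fin d))) = 0 :=
      measure_mono_null hcover (measure_iUnion_null hnull)
    have h3 : (0:ℝ≥0∞) < volume (Set.univ : Set (EuclideanSpace ℝ (Fin d))) :=
      isOpen_univ.measure_pos volume ⟨0, trivial⟩
    simp [h2] at h3
  refine aux_exp_indep (fun i => (inner ℝ (v i) u : ℝ)) (fun i j hij => ?_) a (fun s => ?_)
  · by_contra hij'
    exact hu i j hij' hij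
  · have hh := h (s • u)
    rw [← hh]
    refine Finset.sum_congr rfl fun i _ => ?_
    rw [real_inner_smul_right, mul_comm s]

lemma aux_gaussian_indep {d ℓ : ℕ} (b : ℝ) (hb : 0 < b) (μv : Fin ℓ → EuclideanSpace ℝ (Fin d))
    (hμ : Function.Injective μv) (c : Fin ℓ → ℝ)
    (h : ∀ ω : EuclideanSpace ℝ (Fin d),
      ∑ i, c i * Real.exp (-b * ‖ω - μv i‖ ^ 2) = 0) : c = 0 := by
  have key : ∀ ω : EuclideanSpace ℝ (Fin d),
      ∑ i, (c i * Real.exp (-b * ‖μv i‖ ^ 2)) *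
        Real.exp ((inner ℝ ((2 * b) • μv i) ω : ℝ)) = 0 := by
    intro ω
    have h0 := h ω
    have hfac : ∀ i : Fin ℓ, (c i * Real.exp (-b * ‖μv i‖ ^ 2)) *
        Real.exp ((inner ℝ ((2 * b) • μv i) ω : ℝ))
        = (c i * Real.exp (-b * ‖ω - μv i‖ ^ 2)) * Real.exp (b * ‖ω‖ ^ 2) := by
      intro i
      rw [mul_assoc, mul_assoc, ← Real.exp_add, ← Real.exp_add, real_inner_smul_left,
        norm_sub_sq_real]
      congr 1
      rw [real_inner_comm]
      ring
    calc ∑ i, (c i * Real.exp (-b * ‖μv i‖ ^ 2)) * Real.exp ((inner ℝ ((2 * b) • μv i) ω : ℝ))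
        = (∑ i, c i * Real.exp (-b * ‖ω - μv i‖ ^ 2)) * Real.exp (b * ‖ω‖ ^ 2) := by
          rw [Finset.sum_mul]; exact Finset.sum_congr rfl fun i _ => hfac i
      _ = 0 := by rw [h0, zero_mul]
  have hvinj : Function.Injective fun i => (2 * b) • μv i := by
    intro i j hij
    exact hμ (smul_right_injective _ (by positivity) hij)
  have := aux_exp_indep_multi _ hvinj _ key
  funext i
  have hi := congrFun this i
  simp only [Pi.zero_apply, mul_eq_zero] at hi ⊢
  rcases hi with hi | hi
  · exact hi
  · exact absurd hi (Real.exp_ne_zero _)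

section
variable {d ℓ : ℕ}

lemma integrable_rexp_neg_mul_sq_norm {b : ℝ} (hb : 0 < b) :
    Integrable (fun v : EuclideanSpace ℝ (Fin d) => Real.exp (-b * ‖v‖ ^ 2)) := by
  have h := (GaussianFourier.integrable_cexp_neg_mul_sq_norm_add
    (V := EuclideanSpace ℝ (Fin d)) (b := (b : ℂ)) (by simpa using hb) 0 0).norm
  convert h using 2 with v
  rw [Complex.norm_exp]
  norm_num
  left
  norm_cast

lemma integrable_rexp_neg_mul_sq_norm_sub {b : ℝ} (hb : 0 < b) (m : EuclideanSpace ℝ (Fin d)) :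
    Integrable (fun v : EuclideanSpace ℝ (Fin d) => Real.exp (-b * ‖v - m‖ ^ 2)) :=
  (integrable_rexp_neg_mul_sq_norm hb).comp_sub_right m

lemma integral_rexp_neg_mul_sq_norm_sub {b : ℝ} (hb : 0 < b) (m : EuclideanSpace ℝ (Fin d)) :
    ∫ v : EuclideanSpace ℝ (Fin d), Real.exp (-b * ‖v - m‖ ^ 2)
      = ∫ v : EuclideanSpace ℝ (Fin d), Real.exp (-b * ‖v‖ ^ 2) :=
  integral_sub_right_eq_self (fun v : EuclideanSpace ℝ (Fin d) => Real.exp (-b * ‖v‖ ^ 2)) m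

lemma aux_pointwise (b : ℝ) (x y ω : EuclideanSpace ℝ (Fin d)) :
    Real.exp (-(2*b) * ‖ω - x‖ ^ 2) * Real.exp (-(2*b) * ‖ω - y‖ ^ 2)
    = Real.exp (-(4*b) * ‖ω - (2⁻¹ : ℝ) • (x + y)‖ ^ 2) * Real.exp (-b * ‖x - y‖ ^ 2) := by
  rw [← Real.exp_add, ← Real.exp_add]
  congr 1
  have h1 := norm_sub_sq_real ω ((2⁻¹ : ℝ) • (x + y))
  have h2 : (inner ℝ ω ((2⁻¹:ℝ) • (x+y)) : ℝ) = 2⁻¹ * ((inner ℝ ω x : ℝ) + (inner ℝ ω y : ℝ)) := by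
    rw [real_inner_smul_right, inner_add_right]
  have h3 : ‖(2⁻¹:ℝ) • (x+y)‖ ^ 2 = 4⁻¹ * (‖x‖ ^ 2 + 2 * (inner ℝ x y : ℝ) + ‖y‖ ^ 2) := by
    rw [norm_smul, mul_pow, norm_add_sq_real, Real.norm_eq_abs]
    norm_num
  have h4 := norm_sub_sq_real ω x
  have h5 := norm_sub_sq_real ω y
  have h6 := norm_sub_sq_real x y
  have h7 : (inner ℝ ω y : ℝ) = inner ℝ y ω := real_inner_comm _ _
  have h8 : (inner ℝ ω x : ℝ) = inner ℝ x ω := real_inner_comm _ _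
  rw [h1, h2, h3, h4, h5, h6, h7, h8]
  ring

lemma aux_prod_integrable {b : ℝ} (hb : 0 < b) (x y : EuclideanSpace ℝ (Fin d)) :
    Integrable (fun ω : EuclideanSpace ℝ (Fin d) =>
      Real.exp (-(2*b) * ‖ω - x‖ ^ 2) * Real.exp (-(2*b) * ‖ω - y‖ ^ 2)) := by
  have h := (integrable_rexp_neg_mul_sq_norm_sub (d := d) (b := 4*b) (by positivity)
    ((2⁻¹ : ℝ) • (x + y))).mul_const (Real.exp (-b * ‖x - y‖ ^ 2))
  exact h.congr (Filter.Eventually.of_forall fun ω => (aux_pointwise b x y ω).symm)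

lemma aux_prod_integral {b : ℝ} (hb : 0 < b) (x y : EuclideanSpace ℝ (Fin d)) :
    ∫ ω : EuclideanSpace ℝ (Fin d),
        Real.exp (-(2*b) * ‖ω - x‖ ^ 2) * Real.exp (-(2*b) * ‖ω - y‖ ^ 2)
    = (∫ ω : EuclideanSpace ℝ (Fin d), Real.exp (-(4*b) * ‖ω‖ ^ 2))
        * Real.exp (-b * ‖x - y‖ ^ 2) := by
  calc ∫ ω : EuclideanSpace ℝ (Fin d),
        Real.exp (-(2*b) * ‖ω - x‖ ^ 2) * Real.exp (-(2*b) * ‖ω - y‖ ^ 2)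
      = ∫ ω : EuclideanSpace ℝ (Fin d),
          Real.exp (-(4*b) * ‖ω - (2⁻¹ : ℝ) • (x + y)‖ ^ 2)
            * Real.exp (-b * ‖x - y‖ ^ 2) := by
        exact integral_congr_ae (Filter.Eventually.of_forall fun ω => aux_pointwise b x y ω)
    _ = (∫ ω : EuclideanSpace ℝ (Fin d),
          Real.exp (-(4*b) * ‖ω - (2⁻¹ : ℝ) • (x + y)‖ ^ 2)) * Real.exp (-b * ‖x - y‖ ^ 2) :=
        integral_mul_const _ _
    _ = (∫ ω : EuclideanSpace ℝ (Fin d), Real.exp (-(4*b) * ‖ω‖ ^ 2))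
          * Real.exp (-b * ‖x - y‖ ^ 2) := by
        rw [integral_rexp_neg_mul_sq_norm_sub (by positivity)]

lemma aux_gaussian_form_pos (b : ℝ) (hb : 0 < b) (μv : Fin ℓ → EuclideanSpace ℝ (Fin d))
    (hμ : Function.Injective μv) (c : Fin ℓ → ℝ) (hc : c ≠ 0) :
    0 < ∑ i, ∑ j, c i * c j * Real.exp (-b * ‖μv i - μv j‖ ^ 2) := by
  set f : Fin ℓ → EuclideanSpace ℝ (Fin d) → ℝ := fun i ω => Real.exp (-(2*b) * ‖ω - μv i‖ ^ 2) with hf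
  set F : EuclideanSpace ℝ (Fin d) → ℝ := fun ω => (∑ i, c i * f i ω) ^ 2 with hF
  set C : ℝ := ∫ ω : EuclideanSpace ℝ (Fin d), Real.exp (-(4*b) * ‖ω‖ ^ 2) with hC
  have hCpos : 0 < C := by
    rw [hC, GaussianFourier.integral_rexp_neg_mul_sq_norm (by positivity)]
    positivity
  have hFexp : ∀ ω : EuclideanSpace ℝ (Fin d), F ω = ∑ i, ∑ j, (c i * c j) * (f i ω * f j ω) := by
    intro ω
    have hFω : F ω = (∑ i, c i * f i ω) ^ 2 := rfl
    rw [hFω, sq, Finset.sum_mul_sum]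
    refine Finset.sum_congr rfl fun i _ => Finset.sum_congr rfl fun j _ => by ring
  have hint : ∀ i j : Fin ℓ, Integrable (fun ω : EuclideanSpace ℝ (Fin d) => f i ω * f j ω) :=
    fun i j => aux_prod_integrable hb _ _
  have hFint : Integrable F := by
    have : Integrable (fun ω : EuclideanSpace ℝ (Fin d) => ∑ i, ∑ j, (c i * c j) * (f i ω * f j ω)) := by
      refine integrable_finset_sum _ fun i _ => integrable_finset_sum _ fun j _ => ?_
      exact (hint i j).const_mul _
    exact this.congr (Filter.Eventually.of_forall fun ω => (hFexp ω).symm)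
  have hFcont : Continuous F := by
    refine (continuous_finset_sum _ fun i _ => ?_).pow 2
    exact continuous_const.mul ((Real.continuous_exp).comp
      (continuous_const.mul ((continuous_id.sub continuous_const).norm.pow 2)))
  have hFnonzero : ∃ ω₀ : EuclideanSpace ℝ (Fin d), F ω₀ ≠ 0 := by
    by_contra hcon
    push_neg at hcon
    have hzero : ∀ ω : EuclideanSpace ℝ (Fin d), ∑ i, c i * f i ω = 0 := by
      intro ω
      have h2 : F ω = (∑ i, c i * f i ω) ^ 2 := rfl
      have := hcon ω
      rw [h2] at this
      exact pow_eq_zero_iff two_ne_zero |>.mp this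
    exact hc (aux_gaussian_indep (2*b) (by positivity) μv hμ c hzero)
  obtain ⟨ω₀, hω₀⟩ := hFnonzero
  have hFpos : 0 < ∫ ω : EuclideanSpace ℝ (Fin d), F ω :=
    integral_pos_of_integrable_nonneg_nonzero hFcont hFint (fun ω => sq_nonneg _) hω₀
  have hFval : ∫ ω : EuclideanSpace ℝ (Fin d), F ω
      = C * ∑ i, ∑ j, c i * c j * Real.exp (-b * ‖μv i - μv j‖ ^ 2) := by
    rw [integral_congr_ae (Filter.Eventually.of_forall hFexp)]
    rw [integral_finset_sum _ fun i _ => integrable_finset_sum _ fun j _ => (hint i j).const_mul _]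
    rw [Finset.mul_sum]
    refine Finset.sum_congr rfl fun i _ => ?_
    rw [integral_finset_sum _ fun j _ => (hint i j).const_mul _, Finset.mul_sum]
    refine Finset.sum_congr rfl fun j _ => ?_
    rw [integral_const_mul, aux_prod_integral hb]
    ring
  have := hFval ▸ hFpos
  nlinarith [this, hCpos]


end
/-- The inverse multiquadric RBF kernel matrix at pairwise distinct centers is
symmetric positive definite; in particular the associated quadratic form is
strictly positive on nonzero vectors. -/
theorem inverse_multiquadric_rbf_kernel_matrix_posDef
    (d : ℕ) (hd : 0 < d) (σ : ℝ) (hσ : 0 < σ) (ℓ : ℕ)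
    (μ : Fin ℓ → EuclideanSpace ℝ (Fin d)) (hμ : Function.Injective μ) :
    (Matrix.of fun i j : Fin ℓ =>
        1 / Real.sqrt (‖μ i - μ j‖ ^ 2 + σ ^ 2)).PosDef ∧
    ∀ c : Fin ℓ → ℝ, c ≠ 0 →
      0 < ∑ i, ∑ j, c i * c j / Real.sqrt (‖μ i - μ j‖ ^ 2 + σ ^ 2) := by
  have key : ∀ c : Fin ℓ → ℝ, c ≠ 0 →
      0 < ∑ i, ∑ j, c i * c j / Real.sqrt (‖μ i - μ j‖ ^ 2 + σ ^ 2) := by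
    intro c hc
    set a : Fin ℓ → Fin ℓ → ℝ := fun i j => ‖μ i - μ j‖ ^ 2 + σ ^ 2 with ha
    have hapos : ∀ i j, 0 < a i j := fun i j => by positivity
    set g : ℝ → ℝ := fun t => ∑ i, ∑ j, (c i * c j) * Real.exp (-(a i j) * t ^ 2) with hg
    have hgint_each : ∀ i j : Fin ℓ,
        Integrable (fun t : ℝ => (c i * c j) * Real.exp (-(a i j) * t ^ 2)) :=
      fun i j => (integrable_exp_neg_mul_sq (hapos i j)).const_mul _
    have hgint : Integrable g :=
      integrable_finset_sum _ fun i _ => integrable_finset_sum _ fun j _ => hgint_each i j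
    have hgcont : Continuous g := by
      refine continuous_finset_sum _ fun i _ => continuous_finset_sum _ fun j _ => ?_
      exact continuous_const.mul (Real.continuous_exp.comp
        (continuous_const.mul (continuous_pow 2)))
    have hsplit : ∀ t : ℝ, g t = Real.exp (-σ ^ 2 * t ^ 2) *
        ∑ i, ∑ j, c i * c j * Real.exp (-t ^ 2 * ‖μ i - μ j‖ ^ 2) := by
      intro t
      rw [hg, Finset.mul_sum]
      refine Finset.sum_congr rfl fun i _ => ?_
      rw [Finset.mul_sum]
      refine Finset.sum_congr rfl fun j _ => ?_
      rw [ha]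
      rw [show (-(‖μ i - μ j‖ ^ 2 + σ ^ 2) * t ^ 2)
        = (-σ ^ 2 * t ^ 2) + (-t ^ 2 * ‖μ i - μ j‖ ^ 2) by ring, Real.exp_add]
      ring
    have hgnonneg : ∀ t : ℝ, 0 ≤ g t := by
      intro t
      by_cases ht : t = 0
      · have : g 0 = (∑ i, c i) ^ 2 := by
          rw [hg, sq, Finset.sum_mul_sum]
          refine Finset.sum_congr rfl fun i _ => Finset.sum_congr rfl fun j _ => ?_
          norm_num
        rw [ht, this]
        exact sq_nonneg _
      · rw [hsplit t]
        have := aux_gaussian_form_pos (t ^ 2) (by positivity) μ hμ c hc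
        positivity
    have hg1 : g 1 ≠ 0 := by
      have h1 : 0 < g 1 := by
        rw [hsplit 1]
        have := aux_gaussian_form_pos ((1:ℝ) ^ 2) (by norm_num) μ hμ c hc
        positivity
      exact ne_of_gt h1
    have hintpos : 0 < ∫ t : ℝ, g t :=
      integral_pos_of_integrable_nonneg_nonzero hgcont hgint hgnonneg hg1
    have hval : ∫ t : ℝ, g t = ∑ i, ∑ j, (c i * c j) * Real.sqrt (π / a i j) := by
      rw [hg, integral_finset_sum _ fun i _ => integrable_finset_sum _ fun j _ => hgint_each i j]
      refine Finset.sum_congr rfl fun i _ => ?_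
      rw [integral_finset_sum _ fun j _ => hgint_each i j]
      refine Finset.sum_congr rfl fun j _ => ?_
      rw [integral_const_mul, integral_gaussian]
    have hterm : ∀ i j : Fin ℓ, c i * c j / Real.sqrt (‖μ i - μ j‖ ^ 2 + σ ^ 2)
        = (Real.sqrt π)⁻¹ * ((c i * c j) * Real.sqrt (π / a i j)) := by
      intro i j
      rw [Real.sqrt_div pi_pos.le, ha]
      have hπ : Real.sqrt π ≠ 0 := ne_of_gt (Real.sqrt_pos.mpr pi_pos)
      field_simp
    calc ∑ i, ∑ j, c i * c j / Real.sqrt (‖μ i - μ j‖ ^ 2 + σ ^ 2)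
        = (Real.sqrt π)⁻¹ * ∑ i, ∑ j, (c i * c j) * Real.sqrt (π / a i j) := by
          rw [Finset.mul_sum]
          refine Finset.sum_congr rfl fun i _ => ?_
          rw [Finset.mul_sum]
          exact Finset.sum_congr rfl fun j _ => hterm i j
      _ = (Real.sqrt π)⁻¹ * ∫ t : ℝ, g t := by rw [hval]
      _ > 0 := by
          have : (0:ℝ) < (Real.sqrt π)⁻¹ := by
            rw [inv_pos]
            exact Real.sqrt_pos.mpr pi_pos
          exact mul_pos this hintpos
  refine ⟨Matrix.PosDef.of_dotProduct_mulVec_pos ?_ ?_, key⟩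
  · refine Matrix.ext fun i j => ?_
    simp only [Matrix.conjTranspose_apply, Matrix.of_apply, star_trivial]
    rw [norm_sub_rev]
  · intro x hx
    have hrw : dotProduct (star x)
        ((Matrix.of fun i j : Fin ℓ => 1 / Real.sqrt (‖μ i - μ j‖ ^ 2 + σ ^ 2)) *ᵥ x)
        = ∑ i, ∑ j, x i * x j / Real.sqrt (‖μ i - μ j‖ ^ 2 + σ ^ 2) := by
      simp only [dotProduct, Matrix.mulVec, Pi.star_apply, star_trivial,
        Matrix.of_apply, Finset.mul_sum]
      refine Finset.sum_congr rfl fun i _ => Finset.sum_congr rfl fun j _ => by ring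
    rw [hrw]
    exact key x hx
end

section
/- Let σ > 0, let μ₁, …, μ_ℓ be pairwise distinct points in ℝ^d, and let c ∈ ℝ^ℓ be a nonzero vector satisfying ∑_{i=1}^ℓ c_i = 0. Then ∑_{i,j=1}^ℓ c_i c_j √(‖μ_i − μ_j‖² + σ²) < 0, where ‖·‖ is the Euclidean norm. That is, the multiquadric kernel Φ(r) = √(r² + σ²) is conditionally positive definite of order 1 up to sign: −Φ generates a quadratic form that is strictly positive on the hyperplane of coefficient vectors summing to zero. -/
open MeasureTheory Set Finset

noncomputable def mqf (b s : ℝ) : ℝ := s ^ (-(3/2) : ℝ) * (1 - Real.exp (-(b * s)))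

lemma sum_sum_mul_pow_nonneg {ℓ d n : ℕ} (e : Fin ℓ → ℝ) (w : Fin ℓ → Fin d → ℝ) :
    0 ≤ ∑ i, ∑ j, e i * e j * (∑ k, w i k * w j k) ^ n := by
  have key : ∀ i j : Fin ℓ, (∑ k, w i k * w j k) ^ n
      = ∑ f : Fin n → Fin d, ∏ m, w i (f m) * w j (f m) := by
    intro i j
    have : (∑ k, w i k * w j k) ^ n = ∏ _m : Fin n, (∑ k, w i k * w j k) := by
      rw [Finset.prod_const]; simp
    rw [this, Finset.prod_univ_sum]
    simp [Fintype.piFinset_univ]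
  calc (0:ℝ) ≤ ∑ f : Fin n → Fin d, (∑ i, e i * ∏ m, w i (f m)) ^ 2 :=
        Finset.sum_nonneg fun _ _ => sq_nonneg _
    _ = ∑ i, ∑ j, e i * e j * (∑ k, w i k * w j k) ^ n := by
        simp_rw [key, sq, Finset.sum_mul_sum]
        rw [Finset.sum_comm]
        congr 1; ext i
        rw [Finset.sum_comm]
        congr 1; ext j
        rw [Finset.mul_sum]
        congr 1; ext f
        rw [Finset.prod_mul_distrib]; ring

lemma real_exp_tsum (x : ℝ) : Real.exp x = ∑' n : ℕ, x ^ n / n.factorial := by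
  rw [Real.exp_eq_exp_ℝ, NormedSpace.exp_eq_tsum_div]

lemma gaussian_psd {d ℓ : ℕ} (v : Fin ℓ → EuclideanSpace ℝ (Fin d)) (c : Fin ℓ → ℝ)
    {t : ℝ} (ht : 0 ≤ t) :
    0 ≤ ∑ i, ∑ j, c i * c j * Real.exp (-(t * ‖v i - v j‖ ^ 2)) := by
  set e : Fin ℓ → ℝ := fun i => c i * Real.exp (-(t * ‖v i‖ ^ 2)) with he
  have hip : ∀ i j : Fin ℓ, (inner ℝ (v i) (v j) : ℝ) = ∑ k, v i k * v j k := by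
    intro i j
    rw [PiLp.inner_apply]
    simp only [RCLike.inner_apply', conj_trivial]
  have hsplit : ∀ i j : Fin ℓ, c i * c j * Real.exp (-(t * ‖v i - v j‖ ^ 2))
      = e i * e j * Real.exp (2 * t * ∑ k, v i k * v j k) := by
    intro i j
    have h3 : Real.exp (-(t * ‖v i‖ ^ 2)) * Real.exp (-(t * ‖v j‖ ^ 2))
        * Real.exp (2 * t * ∑ k, v i k * v j k)
        = Real.exp (-(t * (‖v i‖ ^ 2 - 2 * (∑ k, v i k * v j k) + ‖v j‖ ^ 2))) := by
      rw [← Real.exp_add, ← Real.exp_add]; congr 1; ring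
    rw [he]
    simp only
    rw [norm_sub_sq_real, hip, ← h3]
    ring
  simp_rw [hsplit]
  have hexp : ∀ i j : Fin ℓ, e i * e j * Real.exp (2 * t * ∑ k, v i k * v j k)
      = ∑' n : ℕ, (2 * t) ^ n / n.factorial * (e i * e j * (∑ k, v i k * v j k) ^ n) := by
    intro i j
    rw [real_exp_tsum, ← tsum_mul_left]
    congr 1; ext n
    rw [mul_pow]; ring
  simp_rw [hexp]
  rw [← Finset.sum_product']
  have hsummable : ∀ p : Fin ℓ × Fin ℓ, Summable (fun n : ℕ =>
      (2 * t) ^ n / n.factorial * (e p.1 * e p.2 * (∑ k, v p.1 k * v p.2 k) ^ n)) := by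
    intro p
    have h1 : Summable (fun n : ℕ => (2 * t * ∑ k, v p.1 k * v p.2 k) ^ n / n.factorial) :=
      Real.summable_pow_div_factorial _
    apply (h1.mul_left (e p.1 * e p.2)).congr
    intro n
    rw [mul_pow]; ring
  rw [← Summable.tsum_finsetSum (fun p _ => hsummable p)]
  apply tsum_nonneg
  intro n
  rw [← Finset.mul_sum]
  apply mul_nonneg (by positivity)
  rw [Finset.sum_product]
  exact sum_sum_mul_pow_nonneg e (fun i k => v i k)

lemma mqf_nonneg {b : ℝ} (hb : 0 ≤ b) {s : ℝ} (hs : 0 < s) : 0 ≤ mqf b s := by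
  unfold mqf
  apply mul_nonneg (Real.rpow_nonneg hs.le _)
  simp only [sub_nonneg]
  exact Real.exp_le_one_iff.mpr (by nlinarith)

lemma mqf_cont : ∀ b : ℝ, ContinuousOn (mqf b) (Ioi 0) := by
  intro b
  apply ContinuousOn.mul
  · intro s hs
    exact (Real.continuousAt_rpow_const s _ (Or.inl (ne_of_gt hs))).continuousWithinAt
  · fun_prop

lemma mqf_integrable {b : ℝ} (hb : 0 < b) : IntegrableOn (mqf b) (Ioi (0:ℝ)) := by
  rw [← Ioc_union_Ioi_eq_Ioi (zero_le_one)]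
  apply IntegrableOn.union
  · -- on Ioc 0 1, dominate by b * s ^ (-1/2)
    have hmaj : IntegrableOn (fun s : ℝ => b * s ^ (-(1/2) : ℝ)) (Ioc (0:ℝ) 1) := by
      apply Integrable.const_mul
      have := (intervalIntegral.intervalIntegrable_rpow' (a := 0) (b := 1)
        (r := -(1/2)) (by norm_num)).1
      exact this
    apply Integrable.mono' hmaj
    · exact ((mqf_cont b).mono Ioc_subset_Ioi_self).aestronglyMeasurable measurableSet_Ioc
    · rw [ae_restrict_iff' measurableSet_Ioc]
      filter_upwards with s hs
      have hs0 : 0 < s := hs.1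
      rw [Real.norm_eq_abs, abs_of_nonneg (mqf_nonneg hb.le hs0)]
      unfold mqf
      have h1 : 1 - Real.exp (-(b * s)) ≤ b * s := by
        nlinarith [Real.add_one_le_exp (-(b*s))]
      have h2 : s ^ (-(3/2):ℝ) * (b * s) = b * s ^ (-(1/2):ℝ) := by
        rw [show s ^ (-(1/2):ℝ) = s ^ (-(3/2):ℝ) * s ^ (1:ℝ) by
          rw [← Real.rpow_add hs0]; norm_num, Real.rpow_one]
        ring
      calc s ^ (-(3/2):ℝ) * (1 - Real.exp (-(b * s))) ≤ s ^ (-(3/2):ℝ) * (b * s) := by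
            apply mul_le_mul_of_nonneg_left h1 (Real.rpow_nonneg hs0.le _)
        _ = b * s ^ (-(1/2):ℝ) := h2
  · -- on Ioi 1, dominate by s ^ (-3/2)
    apply Integrable.mono' (integrableOn_Ioi_rpow_of_lt (by norm_num : (-(3/2):ℝ) < -1) one_pos)
    · exact ((mqf_cont b).mono (Ioi_subset_Ioi zero_le_one)).aestronglyMeasurable measurableSet_Ioi
    · rw [ae_restrict_iff' measurableSet_Ioi]
      filter_upwards with s hs
      have hs0 : (0:ℝ) < s := lt_trans one_pos hs
      rw [Real.norm_eq_abs, abs_of_nonneg (mqf_nonneg hb.le hs0)]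
      unfold mqf
      nlinarith [Real.rpow_nonneg hs0.le (-(3/2):ℝ), Real.exp_pos (-(b*s)),
        Real.exp_le_one_iff.mpr (by nlinarith : -(b*s) ≤ 0)]

lemma mqf_scale {b : ℝ} (hb : 0 < b) :
    ∫ s in Ioi (0:ℝ), mqf b s = Real.sqrt b * ∫ s in Ioi (0:ℝ), mqf 1 s := by
  have h := integral_comp_mul_left_Ioi (mqf 1) 0 hb
  rw [mul_zero] at h
  have key : ∀ s ∈ Ioi (0:ℝ), mqf b s = b ^ ((3:ℝ)/2) * mqf 1 (b * s) := by
    intro s hs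
    unfold mqf
    rw [one_mul, Real.mul_rpow hb.le (le_of_lt hs)]
    rw [show b ^ ((3:ℝ)/2) * (b ^ (-(3/2):ℝ) * s ^ (-(3/2):ℝ) * (1 - Real.exp (-(b * s))))
      = (b ^ ((3:ℝ)/2) * b ^ (-(3/2):ℝ)) * (s ^ (-(3/2):ℝ) * (1 - Real.exp (-(b * s)))) by ring]
    rw [← Real.rpow_add hb]
    norm_num
  rw [setIntegral_congr_fun measurableSet_Ioi key, integral_const_mul, h, smul_eq_mul]
  rw [show b ^ ((3:ℝ)/2) * (b⁻¹ * ∫ s in Ioi (0:ℝ), mqf 1 s)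
    = (b ^ ((3:ℝ)/2) * b⁻¹) * ∫ s in Ioi (0:ℝ), mqf 1 s by ring]
  congr 1
  rw [← Real.rpow_neg_one b, ← Real.rpow_add hb, Real.sqrt_eq_rpow]
  norm_num

lemma integral_Ioi_pos_of_bound {f : ℝ → ℝ} (hint : IntegrableOn f (Ioi 0))
    (hnn : ∀ s ∈ Ioi (0:ℝ), 0 ≤ f s) {a b ε : ℝ} (ha : 0 < a) (hab : a < b) (hε : 0 < ε)
    (hbd : ∀ s ∈ Icc a b, ε ≤ f s) : 0 < ∫ s in Ioi (0:ℝ), f s := by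
  have hsub : Ioc a b ⊆ Ioi (0:ℝ) := fun x hx => lt_trans ha hx.1
  have h1 : ε * (b - a) ≤ ∫ s in Ioc a b, f s := by
    have := setIntegral_mono_on (integrableOn_const (C := ε) measure_Ioc_lt_top.ne)
      (hint.mono_set hsub) measurableSet_Ioc
      (fun x hx => hbd x ⟨hx.1.le, hx.2⟩)
    rw [setIntegral_const, Real.volume_real_Ioc_of_le hab.le, smul_eq_mul] at this
    linarith [this]
  have h2 : ∫ s in Ioc a b, f s ≤ ∫ s in Ioi (0:ℝ), f s := by
    apply setIntegral_mono_set hint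
    · rw [Filter.EventuallyLE, ae_restrict_iff' measurableSet_Ioi]
      filter_upwards with s hs using hnn s hs
    · exact HasSubset.Subset.eventuallyLE hsub
  nlinarith

lemma mqC_pos : 0 < ∫ s in Ioi (0:ℝ), mqf 1 s := by
  have hexp1 : Real.exp (-1) < 1 := Real.exp_lt_one_iff.mpr (by norm_num)
  apply integral_Ioi_pos_of_bound (mqf_integrable one_pos)
    (fun s hs => mqf_nonneg zero_le_one hs) one_pos (one_lt_two)
    (ε := (2:ℝ) ^ (-(3/2):ℝ) * (1 - Real.exp (-1)))
    (mul_pos (Real.rpow_pos_of_pos two_pos _) (by linarith))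
  intro s hs
  unfold mqf
  rw [one_mul]
  have h1 : (2:ℝ) ^ (-(3/2):ℝ) ≤ s ^ (-(3/2):ℝ) :=
    Real.rpow_le_rpow_of_nonpos (lt_of_lt_of_le one_pos hs.1) hs.2 (by norm_num)
  have h2 : 1 - Real.exp (-1) ≤ 1 - Real.exp (-s) := by
    have := Real.exp_le_exp.mpr (neg_le_neg hs.1)
    linarith
  exact mul_le_mul h1 h2 (by linarith) (Real.rpow_nonneg (by linarith [hs.1]) _)

/-- The multiquadric kernel is conditionally positive definite of order 1 up to
sign: its quadratic form is strictly negative on nonzero coefficient vectors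
summing to zero, at pairwise distinct centers. -/
theorem multiquadric_conditionally_negative_definite
    (d : ℕ) (σ : ℝ) (hσ : 0 < σ) (ℓ : ℕ)
    (μ : Fin ℓ → EuclideanSpace ℝ (Fin d)) (hμ : Function.Injective μ)
    (c : Fin ℓ → ℝ) (hc : c ≠ 0) (hsum : ∑ i, c i = 0) :
    ∑ i, ∑ j, c i * c j * Real.sqrt (‖μ i - μ j‖ ^ 2 + σ ^ 2) < 0 := by
  set C : ℝ := ∫ s in Ioi (0:ℝ), mqf 1 s with hCdef
  have hC : 0 < C := mqC_pos
  set a : Fin ℓ → Fin ℓ → ℝ := fun i j => ‖μ i - μ j‖ ^ 2 + σ ^ 2 with hadef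
  have ha : ∀ i j, 0 < a i j := fun i j => by simp only [hadef]; positivity
  have hsqrt : ∀ i j, Real.sqrt (a i j) = C⁻¹ * ∫ s in Ioi (0:ℝ), mqf (a i j) s := by
    intro i j
    rw [mqf_scale (ha i j), ← hCdef]
    field_simp
  set Q : ℝ → ℝ := fun s => ∑ i, ∑ j, c i * c j * Real.exp (-(s * ‖μ i - μ j‖ ^ 2)) with hQdef
  set G : ℝ → ℝ := fun s => s ^ (-(3/2):ℝ) * Real.exp (-(σ ^ 2 * s)) * Q s with hGdef
  -- Step 1: rewrite LHS using the integral representation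
  have step1 : ∑ i, ∑ j, c i * c j * Real.sqrt (‖μ i - μ j‖ ^ 2 + σ ^ 2)
      = C⁻¹ * ∑ p ∈ (Finset.univ ×ˢ Finset.univ : Finset (Fin ℓ × Fin ℓ)),
          ∫ s in Ioi (0:ℝ), c p.1 * c p.2 * mqf (a p.1 p.2) s := by
    rw [← Finset.sum_product', Finset.mul_sum]
    apply Finset.sum_congr rfl
    intro p _
    have : Real.sqrt (‖μ p.1 - μ p.2‖ ^ 2 + σ ^ 2) = Real.sqrt (a p.1 p.2) := by
      rw [hadef]
    rw [this, hsqrt p.1 p.2, show c p.1 * c p.2 * (C⁻¹ * ∫ s in Ioi (0:ℝ), mqf (a p.1 p.2) s)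
      = C⁻¹ * (c p.1 * c p.2 * ∫ s in Ioi (0:ℝ), mqf (a p.1 p.2) s) by ring, ← integral_const_mul]
  have hint : ∀ p : Fin ℓ × Fin ℓ,
      IntegrableOn (fun s => c p.1 * c p.2 * mqf (a p.1 p.2) s) (Ioi (0:ℝ)) :=
    fun p => (mqf_integrable (ha p.1 p.2)).const_mul _
  have step2 : ∑ p ∈ (Finset.univ ×ˢ Finset.univ : Finset (Fin ℓ × Fin ℓ)),
        ∫ s in Ioi (0:ℝ), c p.1 * c p.2 * mqf (a p.1 p.2) s
      = ∫ s in Ioi (0:ℝ), ∑ p ∈ (Finset.univ ×ˢ Finset.univ : Finset (Fin ℓ × Fin ℓ)),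
          c p.1 * c p.2 * mqf (a p.1 p.2) s :=
    (integral_finset_sum _ (fun p _ => hint p)).symm
  -- Step 3: pointwise identity on Ioi 0
  have step3 : ∀ s ∈ Ioi (0:ℝ), ∑ p ∈ (Finset.univ ×ˢ Finset.univ : Finset (Fin ℓ × Fin ℓ)),
      c p.1 * c p.2 * mqf (a p.1 p.2) s = -G s := by
    intro s hs
    have hterm : ∀ p : Fin ℓ × Fin ℓ, c p.1 * c p.2 * mqf (a p.1 p.2) s
        = c p.1 * c p.2 * s ^ (-(3/2):ℝ)
          - s ^ (-(3/2):ℝ) * Real.exp (-(σ ^ 2 * s))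
            * (c p.1 * c p.2 * Real.exp (-(s * ‖μ p.1 - μ p.2‖ ^ 2))) := by
      intro p
      unfold mqf
      rw [hadef]
      simp only
      rw [show -((‖μ p.1 - μ p.2‖ ^ 2 + σ ^ 2) * s)
        = -(σ ^ 2 * s) + -(s * ‖μ p.1 - μ p.2‖ ^ 2) by ring, Real.exp_add]
      ring
    rw [Finset.sum_congr rfl (fun p _ => hterm p), Finset.sum_sub_distrib]
    have e1 : ∑ p ∈ (Finset.univ ×ˢ Finset.univ : Finset (Fin ℓ × Fin ℓ)), c p.1 * c p.2
        = ∑ i, ∑ j, c i * c j :=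
      Finset.sum_product' Finset.univ Finset.univ (fun i j => c i * c j)
    have hzero : ∑ p ∈ (Finset.univ ×ˢ Finset.univ : Finset (Fin ℓ × Fin ℓ)),
        c p.1 * c p.2 * s ^ (-(3/2):ℝ) = 0 := by
      rw [← Finset.sum_mul, e1, ← Finset.sum_mul_sum, hsum, zero_mul, zero_mul]
    have e2 : ∑ p ∈ (Finset.univ ×ˢ Finset.univ : Finset (Fin ℓ × Fin ℓ)),
        c p.1 * c p.2 * Real.exp (-(s * ‖μ p.1 - μ p.2‖ ^ 2))
        = ∑ i, ∑ j, c i * c j * Real.exp (-(s * ‖μ i - μ j‖ ^ 2)) :=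
      Finset.sum_product' Finset.univ Finset.univ
        (fun i j => c i * c j * Real.exp (-(s * ‖μ i - μ j‖ ^ 2)))
    rw [hzero, ← Finset.mul_sum, e2, hGdef, hQdef]
    ring
  have step4 : ∫ s in Ioi (0:ℝ), ∑ p ∈ (Finset.univ ×ˢ Finset.univ : Finset (Fin ℓ × Fin ℓ)),
        c p.1 * c p.2 * mqf (a p.1 p.2) s = - ∫ s in Ioi (0:ℝ), G s := by
    rw [setIntegral_congr_fun measurableSet_Ioi step3, integral_neg]
  have hGint : IntegrableOn G (Ioi (0:ℝ)) := by
    have hF : IntegrableOn (fun s => ∑ p ∈ (Finset.univ ×ˢ Finset.univ : Finset (Fin ℓ × Fin ℓ)),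
        c p.1 * c p.2 * mqf (a p.1 p.2) s) (Ioi (0:ℝ)) :=
      integrable_finset_sum _ (fun p _ => hint p)
    apply MeasureTheory.IntegrableOn.congr_fun hF.neg _ measurableSet_Ioi
    intro s hs
    simp only [Pi.neg_apply]
    rw [step3 s hs, neg_neg]
  have hGnn : ∀ s ∈ Ioi (0:ℝ), 0 ≤ G s := by
    intro s hs
    apply mul_nonneg (mul_nonneg (Real.rpow_nonneg (le_of_lt hs) _) (Real.exp_pos _).le)
    exact gaussian_psd μ c (le_of_lt hs)
  set L : ℝ := ∑ i, c i * c i with hLdef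
  have hL : 0 < L := by
    obtain ⟨i0, hi0⟩ := Function.ne_iff.mp hc
    exact Finset.sum_pos' (fun i _ => mul_self_nonneg _)
      ⟨i0, Finset.mem_univ _, mul_self_pos.mpr hi0⟩
  have hQlim : Filter.Tendsto Q Filter.atTop (nhds L) := by
    have hrw : L = ∑ i, ∑ j, (if j = i then c i * c j else 0) := by
      rw [hLdef]
      apply Finset.sum_congr rfl
      intro i _
      rw [Finset.sum_ite_eq' Finset.univ i (fun j => c i * c j)]
      simp
    rw [hrw]
    apply tendsto_finset_sum
    intro i _
    apply tendsto_finset_sum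
    intro j _
    by_cases hij : j = i
    · subst hij
      simpa using (tendsto_const_nhds (α := ℝ) :
        Filter.Tendsto (fun _ : ℝ => c j * c j) Filter.atTop (nhds (c j * c j)))
    · rw [if_neg hij]
      have hij' : μ i ≠ μ j := fun h => hij (hμ h).symm
      have hpos : 0 < ‖μ i - μ j‖ ^ 2 :=
        pow_pos (norm_pos_iff.mpr (sub_ne_zero.mpr hij')) 2
      have h1 : Filter.Tendsto (fun s : ℝ => -(s * ‖μ i - μ j‖ ^ 2))
          Filter.atTop Filter.atBot :=
        Filter.tendsto_neg_atTop_atBot.comp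
          (Filter.Tendsto.atTop_mul_const hpos Filter.tendsto_id)
      have h2 := Real.tendsto_exp_atBot.comp h1
      have h3 := h2.const_mul (c i * c j)
      simpa using h3
  obtain ⟨s₀, hs₀⟩ := Filter.eventually_atTop.mp
    (hQlim.eventually (eventually_ge_nhds (by linarith : L / 2 < L)))
  set A : ℝ := max s₀ 1 with hA
  have hA1 : (1:ℝ) ≤ A := le_max_right _ _
  have hA0 : (0:ℝ) < A := lt_of_lt_of_le one_pos hA1
  set ε : ℝ := (A + 1) ^ (-(3/2):ℝ) * Real.exp (-(σ ^ 2 * (A + 1))) * (L / 2) with hε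
  have hεpos : 0 < ε := by
    apply mul_pos (mul_pos (Real.rpow_pos_of_pos (by linarith) _) (Real.exp_pos _))
    linarith
  have hGbd : ∀ s ∈ Icc A (A + 1), ε ≤ G s := by
    intro s hsI
    have hs0 : 0 < s := lt_of_lt_of_le hA0 hsI.1
    have h1 : (A + 1) ^ (-(3/2):ℝ) ≤ s ^ (-(3/2):ℝ) :=
      Real.rpow_le_rpow_of_nonpos hs0 hsI.2 (by norm_num)
    have h2 : Real.exp (-(σ ^ 2 * (A + 1))) ≤ Real.exp (-(σ ^ 2 * s)) := by
      apply Real.exp_le_exp.mpr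
      nlinarith [hsI.2, sq_nonneg σ]
    have h3 : L / 2 ≤ Q s := hs₀ s (le_trans (le_max_left _ _) hsI.1)
    rw [hGdef]
    simp only
    rw [hε]
    apply mul_le_mul (mul_le_mul h1 h2 (Real.exp_pos _).le (Real.rpow_nonneg hs0.le _))
      h3 (by linarith) (mul_nonneg (Real.rpow_nonneg hs0.le _) (Real.exp_pos _).le)
  have hGpos : 0 < ∫ s in Ioi (0:ℝ), G s :=
    integral_Ioi_pos_of_bound hGint hGnn hA0 (by linarith) hεpos hGbd
  rw [step1, step2, step4, mul_neg]
  exact neg_lt_zero.mpr (mul_pos (inv_pos.mpr hC) hGpos)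
end
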